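/- Let n ≥ 2 be a natural number and let κ₁, κ₂ be real numbers with κ₁ ≠ κ₂. If (κ₁ − 1)·(n·κ₂ + 1 − 2n)² = (κ₂ − 1)·(n·κ₁ + 1 − 2n)², then (κ₁ − 1)·(κ₂ − 1) = (n − 1)²/n². -/
import Mathlib


theorem stmt_0 (n : ℕ) (hn : 2 ≤ n) (κ₁ κ₂ : ℝ) (hne : κ₁ ≠ κ₂)
    (h : (κ₁ - 1) * ((n : ℝ) * κ₂ + 1 - 2 * n) ^ 2
        = (κ₂ - 1) * ((n : ℝ) * κ₁ + 1 - 2 * n) ^ 2) :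
    (κ₁ - 1) * (κ₂ - 1) = ((n : ℝ) - 1) ^ 2 / (n : ℝ) ^ 2 := by
  have hN : (n : ℝ) ≠ 0 := by
    have : (2 : ℝ) ≤ (n : ℝ) := by exact_mod_cast hn
    linarith
  have hd : κ₁ - κ₂ ≠ 0 := sub_ne_zero.mpr hne
  have key : (κ₁ - κ₂) * (((n : ℝ) - 1) ^ 2 - (n : ℝ) ^ 2 * (κ₁ - 1) * (κ₂ - 1)) = 0 := by
    linear_combination h
  have key2 : ((n : ℝ) - 1) ^ 2 - (n : ℝ) ^ 2 * (κ₁ - 1) * (κ₂ - 1) = 0 :=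
    (mul_eq_zero.mp key).resolve_left hd
  field_simp
  linear_combination -key2
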